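/- Let K be a commutative ring, let G be a group, and let x_α, x_β, x_{α+β}, x_{2α+β} : (K,+) → G be group homomorphisms satisfying, for all a, b ∈ K: (i) x_β(b)x_α(a) = x_α(a)x_β(b)x_{α+β}(ab)x_{2α+β}(a²b); (ii) x_{α+β}(b)x_α(a) = x_α(a)x_{α+β}(b)x_{2α+β}(2ab); and (iii) the pairs of subgroups x_{2α+β}(K) and x_α(K), x_{α+β}(K) and x_β(K), x_{2α+β}(K) and x_β(K), x_{2α+β}(K) and x_{α+β}(K) commute elementwise. (These are the defining commutator relations of the unipotent group of type B₂ over K, with α the short simple root.) Then for every n ≥ 1 and all a₁, …, a_n, b₁, …, b_n ∈ K, setting A_i := a₁ + ⋯ + a_i, B_n := Σ_{i=1}^n b_i, R_n := Σ_{i=1}^n b_i·A_i and S_n := Σ_{i=1}^n b_i·A_i², one has x_β(b_n)x_α(a_n) ⋯ x_β(b₁)x_α(a₁) = x_α(A_n) · x_β(B_n) · x_{α+β}(R_n) · x_{2α+β}(S_n). -/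
import Mathlib

private lemma swap_aux {G : Type*} [Group G] {x y : G} (h : Commute x y) (t : G) :
    x * (y * t) = y * (x * t) := by rw [← mul_assoc, h.eq, mul_assoc]

private lemma step_aux {K : Type*} [CommRing K] {G : Type*} [Group G]
    (Xa Xb Xab X2 : K → G)
    (ha : ∀ s t : K, Xa (s + t) = Xa s * Xa t)
    (hb : ∀ s t : K, Xb (s + t) = Xb s * Xb t)
    (hab : ∀ s t : K, Xab (s + t) = Xab s * Xab t)
    (h2 : ∀ s t : K, X2 (s + t) = X2 s * X2 t)
    (R1 : ∀ a b : K, Xb b * Xa a = Xa a * Xb b * Xab (a * b) * X2 (a ^ 2 * b))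
    (C2 : ∀ a b : K, Commute (Xab a) (Xb b))
    (C3 : ∀ a b : K, Commute (X2 a) (Xb b))
    (C4 : ∀ a b : K, Commute (X2 a) (Xab b))
    (a' b' A B R S : K) :
    Xb b' * Xa a' * (Xa A * Xb B * Xab R * X2 S)
      = Xa (A + a') * Xb (B + b') * Xab (R + b' * (A + a'))
          * X2 (S + b' * (A + a') ^ 2) := by
  have e1 : A + a' = a' + A := add_comm _ _
  have e2 : B + b' = b' + B := add_comm _ _
  have e3 : R + b' * (A + a') = (a' + A) * b' + R := by ring
  have e4 : S + b' * (A + a') ^ 2 = (a' + A) ^ 2 * b' + S := by ring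
  rw [e3, e4, e1, e2, ha, hb, hab, h2]
  simp only [mul_assoc]
  rw [← mul_assoc (Xa a') (Xa A), ← ha a' A, ← mul_assoc (Xb b'), R1]
  simp only [mul_assoc]
  rw [swap_aux (C3 ((a' + A) ^ 2 * b') B), swap_aux (C2 ((a' + A) * b') B),
    swap_aux (C4 ((a' + A) ^ 2 * b') R)]
  rw [ha a' A, mul_assoc]

/-- Normal form in the unipotent group of type `B₂` over a commutative
ring `K` (with `α` the short simple root): given one-parameter subgroups
`x_α, x_β, x_{α+β}, x_{2α+β}` of a group `G` satisfying the defining commutator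
relations of type `B₂`, one has
`x_β(bₙ)x_α(aₙ) ⋯ x_β(b₁)x_α(a₁) = x_α(Aₙ) x_β(Bₙ) x_{α+β}(Rₙ) x_{2α+β}(Sₙ)` where
`Aᵢ = a₁ + ⋯ + aᵢ`, `Bₙ = Σ bᵢ`, `Rₙ = Σ bᵢAᵢ` and `Sₙ = Σ bᵢAᵢ²`. -/
theorem unipotent_B2_normal_form
    (K : Type*) [CommRing K] {G : Type*} [Group G]
    (xa xb xab x2ab : Multiplicative K →* G)
    (R1 : ∀ a b : K,
      xb (Multiplicative.ofAdd b) * xa (Multiplicative.ofAdd a) =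
      xa (Multiplicative.ofAdd a) * xb (Multiplicative.ofAdd b) *
        xab (Multiplicative.ofAdd (a * b)) * x2ab (Multiplicative.ofAdd (a ^ 2 * b)))
    (R2 : ∀ a b : K,
      xab (Multiplicative.ofAdd b) * xa (Multiplicative.ofAdd a) =
      xa (Multiplicative.ofAdd a) * xab (Multiplicative.ofAdd b) *
        x2ab (Multiplicative.ofAdd (2 * a * b)))
    (C1 : ∀ a b : K, Commute (x2ab (Multiplicative.ofAdd a)) (xa (Multiplicative.ofAdd b)))
    (C2 : ∀ a b : K, Commute (xab (Multiplicative.ofAdd a)) (xb (Multiplicative.ofAdd b)))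
    (C3 : ∀ a b : K, Commute (x2ab (Multiplicative.ofAdd a)) (xb (Multiplicative.ofAdd b)))
    (C4 : ∀ a b : K, Commute (x2ab (Multiplicative.ofAdd a)) (xab (Multiplicative.ofAdd b)))
    (n : ℕ) (hn : 1 ≤ n) (a b : ℕ → K) :
    ((List.range n).map (fun i =>
        xb (Multiplicative.ofAdd (b (n - i))) * xa (Multiplicative.ofAdd (a (n - i))))).prod
      =
      xa (Multiplicative.ofAdd (∑ k ∈ Finset.Icc 1 n, a k)) *
      xb (Multiplicative.ofAdd (∑ k ∈ Finset.Icc 1 n, b k)) *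
      xab (Multiplicative.ofAdd
        (∑ i ∈ Finset.Icc 1 n, b i * ∑ k ∈ Finset.Icc 1 i, a k)) *
      x2ab (Multiplicative.ofAdd
        (∑ i ∈ Finset.Icc 1 n, b i * (∑ k ∈ Finset.Icc 1 i, a k) ^ 2)) := by
  clear hn
  induction n with
  | zero => simp
  | succ n ih =>
    have h1 : (1 : ℕ) ≤ n + 1 := Nat.le_add_left 1 n
    rw [Finset.sum_Icc_succ_top h1 (fun i => b i * ∑ k ∈ Finset.Icc 1 i, a k),
        Finset.sum_Icc_succ_top h1 (fun i => b i * (∑ k ∈ Finset.Icc 1 i, a k) ^ 2),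
        Finset.sum_Icc_succ_top h1 a, Finset.sum_Icc_succ_top h1 b]
    rw [List.range_succ_eq_map, List.map_cons, List.prod_cons, List.map_map]
    simp only [Function.comp_def, Nat.succ_sub_succ, Nat.sub_zero]
    rw [ih]
    exact step_aux (fun s => xa (Multiplicative.ofAdd s)) (fun s => xb (Multiplicative.ofAdd s))
      (fun s => xab (Multiplicative.ofAdd s)) (fun s => x2ab (Multiplicative.ofAdd s))
      (fun s t => map_mul xa (Multiplicative.ofAdd s) (Multiplicative.ofAdd t))
      (fun s t => map_mul xb (Multiplicative.ofAdd s) (Multiplicative.ofAdd t))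
      (fun s t => map_mul xab (Multiplicative.ofAdd s) (Multiplicative.ofAdd t))
      (fun s t => map_mul x2ab (Multiplicative.ofAdd s) (Multiplicative.ofAdd t))
      R1 C2 C3 C4 _ _ _ _ _ _
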